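/- Let each f_t : ℝ^d → ℝ, t = 1, …, T, be convex and differentiable with ‖∇f_t(w)‖ ≤ G for all w ∈ 𝒟, let w_1 ∈ 𝒟, and define iterates of online gradient descent by w_{t+1} = Π(w_t − η·∇f_t(w_t)) with step size η = S/(G·T). If the switching budget S satisfies D ≤ S < D√T, then the continuous switching constraint Σ_{t=2}^T ‖w_t − w_{t−1}‖ ≤ S holds, and the regret satisfies R = Σ_{t=1}^T f_t(w_t) − min_{w ∈ 𝒟} Σ_{t=1}^T f_t(w) ≤ D·G·(D·T/S). -/

import Mathlib

open scoped InnerProductSpace BigOperators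

/-- Euclidean projection onto the ball `{w : ‖w‖ ≤ D/2}` in `ℝ^d`. -/
noncomputable def ballProj (d : ℕ) (D : ℝ) (p : EuclideanSpace ℝ (Fin d)) :
    EuclideanSpace ℝ (Fin d) :=
  if ‖p‖ ≤ D / 2 then p else (D / (2 * ‖p‖)) • p

/-- Projection onto the ball does not increase distance to points of the ball. -/
lemma ballProj_contract {d : ℕ} {D : ℝ} (hD : 0 < D) (p v : EuclideanSpace ℝ (Fin d))
    (hv : ‖v‖ ≤ D / 2) : ‖ballProj d D p - v‖ ≤ ‖p - v‖ := by
  unfold ballProj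
  split_ifs with h
  · exact le_rfl
  push_neg at h
  have hp : 0 < ‖p‖ := lt_trans (by linarith) h
  set c : ℝ := D / (2 * ‖p‖) with hc
  have hc0 : 0 < c := by positivity
  have hcp : c * ‖p‖ = D / 2 := by
    field_simp [hc]
    rw [hc]; field_simp [hp.ne']
  have hc1 : c < 1 := by
    rw [div_lt_one (by positivity)]; linarith
  have hsq : ‖c • p - v‖ ^ 2 ≤ ‖p - v‖ ^ 2 := by
    rw [norm_sub_sq_real, norm_sub_sq_real, norm_smul, real_inner_smul_left]
    have hip : ⟪p, v⟫_ℝ ≤ ‖p‖ * ‖v‖ := real_inner_le_norm p v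
    have habs : ‖(c : ℝ)‖ = c := by
      rw [Real.norm_eq_abs, abs_of_pos hc0]
    rw [habs]
    nlinarith [norm_nonneg v, norm_nonneg p, mul_pos hc0 hp]
  have h1 : ‖c • p - v‖ ≤ ‖p - v‖ := by
    have := Real.sqrt_le_sqrt hsq
    rwa [Real.sqrt_sq (norm_nonneg _), Real.sqrt_sq (norm_nonneg _)] at this
  exact h1

/-- The projection lands in the ball. -/
lemma ballProj_mem {d : ℕ} {D : ℝ} (hD : 0 < D) (p : EuclideanSpace ℝ (Fin d)) :
    ‖ballProj d D p‖ ≤ D / 2 := by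
  unfold ballProj
  split_ifs with h
  · exact h
  push_neg at h
  have hp : 0 < ‖p‖ := lt_trans (by linarith) h
  rw [norm_smul, Real.norm_eq_abs, abs_of_pos (by positivity : (0:ℝ) < D / (2 * ‖p‖))]
  rw [div_mul_eq_mul_div]
  rw [div_le_div_iff₀ (by positivity) (by norm_num)]
  nlinarith

/-- First-order condition for convex differentiable functions, in gradient form. -/
lemma convex_grad_ineq {d : ℕ} (f : EuclideanSpace ℝ (Fin d) → ℝ)
    (hconv : ConvexOn ℝ Set.univ f) (hdiff : Differentiable ℝ f)
    (x v : EuclideanSpace ℝ (Fin d)) :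
    f x - f v ≤ ⟪gradient f x, x - v⟫_ℝ := by
  rcases eq_or_ne v x with rfl | hne
  · simp
  set g := gradient f x with hg
  have hfd : HasFDerivAt f (InnerProductSpace.toDual ℝ _ g) x :=
    (hdiff x).hasGradientAt
  set φ : ℝ → ℝ := fun θ => f ((1 - θ) • x + θ • v) with hφ
  have hφconv : ConvexOn ℝ Set.univ φ := by
    have := hconv.comp_affineMap (AffineMap.lineMap x v : ℝ →ᵃ[ℝ] EuclideanSpace ℝ (Fin d))
    simp only [Set.preimage_univ] at this
    have heq : φ = f ∘ (AffineMap.lineMap x v : ℝ →ᵃ[ℝ] EuclideanSpace ℝ (Fin d)) := by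
      funext θ
      simp only [hφ, Function.comp_apply, AffineMap.lineMap_apply_module]
    rw [heq]; exact this
  have hγ : HasDerivAt (fun θ : ℝ => (1 - θ) • x + θ • v) (v - x) 0 := by
    have h1 : HasDerivAt (fun θ : ℝ => (1 - θ)) (-1) 0 := by
      simpa using (hasDerivAt_id (0:ℝ)).const_sub 1
    have h2 := (h1.smul_const x).add ((hasDerivAt_id (0:ℝ)).smul_const v)
    rw [show v - x = (-1:ℝ) • x + (1:ℝ) • v by module]
    exact h2
  have hφd : HasDerivAt φ (⟪g, v - x⟫_ℝ) 0 := by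
    have hx0 : ((1 - (0:ℝ)) • x + (0:ℝ) • v) = x := by module
    have hfd' : HasFDerivAt f (InnerProductSpace.toDual ℝ _ g)
        ((fun θ : ℝ => (1 - θ) • x + θ • v) 0) := by
      simpa [hx0] using hfd
    have h := hfd'.comp_hasDerivAt 0 hγ
    simp only [InnerProductSpace.toDual_apply_apply] at h
    exact h
  have hslope := hφconv.le_slope_of_hasDerivAt (Set.mem_univ (0:ℝ)) (Set.mem_univ (1:ℝ))
    zero_lt_one hφd
  have hφ0 : φ 0 = f x := by simp [hφ]
  have hφ1 : φ 1 = f v := by simp [hφ]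
  rw [slope_def_field, hφ0, hφ1] at hslope
  rw [show (1:ℝ) - 0 = 1 by norm_num, div_one] at hslope
  have hinner : ⟪g, x - v⟫_ℝ = -⟪g, v - x⟫_ℝ := by
    rw [← inner_neg_right, neg_sub]
  show f x - f v ≤ ⟪g, x - v⟫_ℝ
  rw [hinner]
  linarith

/-- Arithmetic bound for the final step. -/
lemma arith_bound (D G S Tr η : ℝ) (hD : 0 < D) (hG : 0 < G) (hS : 0 < S) (hT : 0 < Tr)
    (hη : η = S / (G * Tr)) (hS2 : S^2 ≤ D^2 * Tr) :
    D^2/(2*η) + Tr * (η * G^2/2) ≤ D * G * (D * Tr / S) := by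
  have hη0 : 0 < η := by rw [hη]; positivity
  have e1 : D^2/(2*η) = D^2*G*Tr/(2*S) := by
    rw [hη]; field_simp
  have e2 : Tr*(η*G^2/2) = S*G/2 := by
    rw [hη]; field_simp
  rw [e1, e2]
  have hdiffe : D*G*(D*Tr/S) - (D^2*G*Tr/(2*S) + S*G/2) = (D^2*Tr - S^2)*G/(2*S) := by
    field_simp; ring
  have hge : 0 ≤ (D^2*Tr - S^2)*G/(2*S) := by
    apply div_nonneg _ (by positivity)
    exact mul_nonneg (by linarith) hG.le
  linarith

/-- Online gradient descent with step size `η = S/(G·T)` on convex losses with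
gradients bounded by `G` on the ball `𝒟`: if `D ≤ S < D√T`, then the continuous switching
constraint holds and the regret is at most `D·G·(D·T/S)`. -/
theorem stmt9 (d T : ℕ) (hT : 1 ≤ T) (D G S : ℝ) (hD : 0 < D) (hG : 0 < G)
    (hSlow : D ≤ S) (hShigh : S < D * Real.sqrt T)
    (f : ℕ → EuclideanSpace ℝ (Fin d) → ℝ)
    (hconv : ∀ t ∈ Finset.Icc 1 T, ConvexOn ℝ Set.univ (f t))
    (hdiff : ∀ t ∈ Finset.Icc 1 T, Differentiable ℝ (f t))
    (hgrad : ∀ t ∈ Finset.Icc 1 T,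
      ∀ v ∈ Metric.closedBall (0 : EuclideanSpace ℝ (Fin d)) (D / 2), ‖gradient (f t) v‖ ≤ G)
    (η : ℝ) (hη : η = S / (G * T))
    (w : ℕ → EuclideanSpace ℝ (Fin d))
    (hw1 : w 1 ∈ Metric.closedBall (0 : EuclideanSpace ℝ (Fin d)) (D / 2))
    (hupd : ∀ t ∈ Finset.Icc 1 (T - 1), w (t + 1) = ballProj d D (w t - η • gradient (f t) (w t))) :
    (∑ t ∈ Finset.Icc 2 T, ‖w t - w (t - 1)‖ ≤ S) ∧
    (∑ t ∈ Finset.Icc 1 T, f t (w t)) -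
        (⨅ v : Metric.closedBall (0 : EuclideanSpace ℝ (Fin d)) (D / 2),
          ∑ t ∈ Finset.Icc 1 T, f t (v : EuclideanSpace ℝ (Fin d))) ≤
      D * G * (D * T / S) := by
  have hS : 0 < S := lt_of_lt_of_le hD hSlow
  have hT0 : (0:ℝ) < T := by exact_mod_cast Nat.lt_of_lt_of_le Nat.zero_lt_one hT
  have hη0 : 0 < η := by rw [hη]; positivity
  -- iterates stay in the ball
  have hball : ∀ t, 1 ≤ t → t ≤ T → ‖w t‖ ≤ D / 2 := by
    intro t
    induction t with
    | zero => intro h; omega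
    | succ n _ =>
      intro h1 hle
      rcases Nat.eq_zero_or_pos n with hn0 | hn1
      · subst hn0
        simpa [mem_closedBall_zero_iff] using hw1
      · have hnT : n ≤ T - 1 := by omega
        rw [hupd n (Finset.mem_Icc.mpr ⟨hn1, hnT⟩)]
        exact ballProj_mem hD _
  -- single step movement bound
  have hstep : ∀ t, 1 ≤ t → t ≤ T - 1 → ‖w (t+1) - w t‖ ≤ η * G := by
    intro t h1 h2
    have htT : t ≤ T := by omega
    have hmem : t ∈ Finset.Icc 1 T := Finset.mem_Icc.mpr ⟨h1, htT⟩
    have hwt : ‖w t‖ ≤ D/2 := hball t h1 htT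
    rw [hupd t (Finset.mem_Icc.mpr ⟨h1, h2⟩)]
    calc ‖ballProj d D (w t - η • gradient (f t) (w t)) - w t‖
        ≤ ‖(w t - η • gradient (f t) (w t)) - w t‖ := ballProj_contract hD _ _ hwt
      _ = η * ‖gradient (f t) (w t)‖ := by
          have he : (w t - η • gradient (f t) (w t)) - w t = -(η • gradient (f t) (w t)) := by
            module
          rw [he, norm_neg, norm_smul, Real.norm_eq_abs, abs_of_pos hη0]
      _ ≤ η * G := by
          have := hgrad t hmem (w t) (mem_closedBall_zero_iff.mpr hwt)
          exact mul_le_mul_of_nonneg_left this hη0.le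
  have hηG : η * G = S / T := by
    rw [hη]; field_simp
  -- Part 1
  have part1 : ∑ t ∈ Finset.Icc 2 T, ‖w t - w (t-1)‖ ≤ S := by
    have hbound : ∀ t ∈ Finset.Icc 2 T, ‖w t - w (t-1)‖ ≤ η * G := by
      intro t ht
      obtain ⟨h2, hT'⟩ := Finset.mem_Icc.mp ht
      have he : t - 1 + 1 = t := by omega
      rw [← he]
      simpa using hstep (t-1) (by omega) (by omega)
    calc ∑ t ∈ Finset.Icc 2 T, ‖w t - w (t-1)‖
        ≤ (Finset.Icc 2 T).card • (η * G) := Finset.sum_le_card_nsmul _ _ _ hbound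
      _ = ((T - 1 : ℕ) : ℝ) * (η * G) := by
          rw [Nat.card_Icc]; simp [nsmul_eq_mul]
      _ ≤ (T : ℝ) * (η * G) := by
          have hc : ((T - 1 : ℕ) : ℝ) ≤ (T : ℝ) := by exact_mod_cast Nat.sub_le T 1
          have : 0 ≤ η * G := by positivity
          exact mul_le_mul_of_nonneg_right hc this
      _ = S := by rw [hηG]; field_simp
  -- Part 2: regret bound against each comparator v
  have hreg : ∀ v : EuclideanSpace ℝ (Fin d), ‖v‖ ≤ D / 2 →
      ∑ t ∈ Finset.Icc 1 T, f t (w t) - D * G * (D * T / S)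
        ≤ ∑ t ∈ Finset.Icc 1 T, f t v := by
    intro v hv
    set A : ℕ → ℝ := fun t => if t ≤ T then ‖w t - v‖ ^ 2 else 0 with hA
    have hstep2 : ∀ t ∈ Finset.Icc 1 T,
        f t (w t) - f t v ≤ (A t - A (t+1)) / (2*η) + η * G^2 / 2 := by
      intro t ht
      obtain ⟨h1, h2⟩ := Finset.mem_Icc.mp ht
      set g := gradient (f t) (w t) with hgdef
      have hwt : ‖w t‖ ≤ D/2 := hball t h1 h2
      have hgle : ‖g‖ ≤ G := hgrad t ht (w t) (mem_closedBall_zero_iff.mpr hwt)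
      have h1' : f t (w t) - f t v ≤ ⟪g, w t - v⟫_ℝ :=
        convex_grad_ineq (f t) (hconv t ht) (hdiff t ht) (w t) v
      have hexp : ‖(w t - η • g) - v‖^2
          = ‖w t - v‖^2 - 2*η*⟪g, w t - v⟫_ℝ + η^2*‖g‖^2 := by
        have he : (w t - η • g) - v = (w t - v) - η • g := by module
        rw [he, norm_sub_sq_real, real_inner_smul_right, norm_smul, Real.norm_eq_abs,
            abs_of_pos hη0, real_inner_comm (w t - v) g]
        ring
      have hAle : A (t+1) ≤ ‖(w t - η • g) - v‖^2 := by
        by_cases hc : t + 1 ≤ T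
        · have hAe : A (t+1) = ‖w (t+1) - v‖^2 := by simp [hA, hc]
          rw [hAe, hupd t (Finset.mem_Icc.mpr ⟨h1, by omega⟩)]
          have hpc := ballProj_contract hD (w t - η • g) v hv
          nlinarith [norm_nonneg (ballProj d D (w t - η • g) - v)]
        · have hAe : A (t+1) = 0 := by simp [hA, hc]
          rw [hAe]; positivity
      have hAt : A t = ‖w t - v‖^2 := by simp [hA, h2]
      have hG2 : ‖g‖^2 ≤ G^2 := by nlinarith [norm_nonneg g]
      have hIe : ⟪g, w t - v⟫_ℝ
          = (‖w t - v‖^2 - ‖(w t - η • g) - v‖^2)/(2*η) + η*‖g‖^2/2 := by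
        rw [hexp]; field_simp; ring
      calc f t (w t) - f t v ≤ ⟪g, w t - v⟫_ℝ := h1'
        _ = (‖w t - v‖^2 - ‖(w t - η • g) - v‖^2)/(2*η) + η*‖g‖^2/2 := hIe
        _ ≤ (A t - A (t+1))/(2*η) + η*G^2/2 := by
            rw [hAt]
            gcongr
    have htel : ∀ N, 1 ≤ N →
        ∑ t ∈ Finset.Icc 1 N, (A t - A (t+1)) = A 1 - A (N+1) := by
      intro N hN
      induction N, hN using Nat.le_induction with
      | base => simp
      | succ n hn ih =>
        rw [Finset.sum_Icc_succ_top (by omega : 1 ≤ n+1), ih]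
        ring
    have hsum : ∑ t ∈ Finset.Icc 1 T, (f t (w t) - f t v)
        ≤ (A 1 - A (T+1))/(2*η) + (T : ℝ) * (η * G^2/2) := by
      calc ∑ t ∈ Finset.Icc 1 T, (f t (w t) - f t v)
          ≤ ∑ t ∈ Finset.Icc 1 T, ((A t - A (t+1))/(2*η) + η*G^2/2) :=
            Finset.sum_le_sum hstep2
        _ = (∑ t ∈ Finset.Icc 1 T, (A t - A (t+1)))/(2*η)
              + ((Finset.Icc 1 T).card : ℝ) * (η*G^2/2) := by
            rw [Finset.sum_add_distrib, ← Finset.sum_div, Finset.sum_const, nsmul_eq_mul]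
        _ = (A 1 - A (T+1))/(2*η) + (T : ℝ) * (η * G^2/2) := by
            rw [htel T hT, Nat.card_Icc]
            norm_num
    have hAT1 : A (T+1) = 0 := by simp [hA]
    have hA1 : A 1 ≤ D^2 := by
      have hAe : A 1 = ‖w 1 - v‖^2 := by simp [hA, hT]
      have hn : ‖w 1 - v‖ ≤ D := by
        have := norm_sub_le (w 1) v
        have hw1' : ‖w 1‖ ≤ D/2 := mem_closedBall_zero_iff.mp hw1
        linarith
      rw [hAe]
      nlinarith [norm_nonneg (w 1 - v)]
    have hS2 : S^2 ≤ D^2 * T := by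
      have hsq : Real.sqrt (T:ℝ) ^ 2 = (T:ℝ) := Real.sq_sqrt (by positivity)
      have h2 : S*S < (D*Real.sqrt T)*(D*Real.sqrt T) :=
        mul_lt_mul'' hShigh hShigh hS.le hS.le
      have h3 : (D*Real.sqrt T)*(D*Real.sqrt T) = D^2*T := by
        calc (D*Real.sqrt T)*(D*Real.sqrt T) = D^2 * Real.sqrt T ^ 2 := by ring
          _ = D^2 * T := by rw [hsq]
      rw [pow_two]
      rw [h3] at h2
      linarith
    have harith : D^2/(2*η) + (T : ℝ) * (η * G^2/2) ≤ D * G * (D * T / S) :=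
      arith_bound D G S (T:ℝ) η hD hG hS hT0 hη hS2
    have hfinal : ∑ t ∈ Finset.Icc 1 T, (f t (w t) - f t v) ≤ D * G * (D * T / S) := by
      calc ∑ t ∈ Finset.Icc 1 T, (f t (w t) - f t v)
          ≤ (A 1 - A (T+1))/(2*η) + (T : ℝ) * (η * G^2/2) := hsum
        _ ≤ D^2/(2*η) + (T : ℝ) * (η * G^2/2) := by
            rw [hAT1, sub_zero]
            gcongr
        _ ≤ D * G * (D * T / S) := harith
    rw [Finset.sum_sub_distrib] at hfinal
    linarith
  refine ⟨part1, ?_⟩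
  haveI : Nonempty (Metric.closedBall (0 : EuclideanSpace ℝ (Fin d)) (D/2)) :=
    ⟨⟨0, by simp [Metric.mem_closedBall]; positivity⟩⟩
  have hinf : ∑ t ∈ Finset.Icc 1 T, f t (w t) - D * G * (D * T / S)
      ≤ ⨅ v : Metric.closedBall (0 : EuclideanSpace ℝ (Fin d)) (D / 2),
          ∑ t ∈ Finset.Icc 1 T, f t (v : EuclideanSpace ℝ (Fin d)) :=
    le_ciInf fun v => hreg v (mem_closedBall_zero_iff.mp v.2)
  linarith
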